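/- Let x be a point of the relaxed polytope of a (d_v, d_c)-regular LDPC code, let V_frac(x) be its set of fractional coordinates and C_frac(x) the set of checks adjacent to at least one fractional coordinate. Then the number of active inequalities at x is at most (m − |C_frac(x)|)·d_c + 2·|C_frac(x)| + n − |V_frac(x)|. -/

import Mathlib

open Finset
open scoped symmDiff

section aux

variable {α : Type*} [DecidableEq α]

private lemma sum_g (N S : Finset α) (x : α → ℝ) (hS : S ⊆ N) :
    ∑ i ∈ N \ S, x i + ∑ i ∈ S, (1 - x i)
      = ∑ i ∈ N, (if i ∈ S then 1 - x i else x i) := by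
  rw [← Finset.sum_sdiff hS]
  congr 1
  · exact Finset.sum_congr rfl fun i hi => by
      rw [if_neg (Finset.mem_sdiff.mp hi).2]
  · exact Finset.sum_congr rfl fun i hi => by rw [if_pos hi]

private lemma pair_zero (N S T : Finset α) (x : α → ℝ)
    (hbox : ∀ i, 0 ≤ x i ∧ x i ≤ 1)
    (hS : S ⊆ N) (hT : T ⊆ N) (hSodd : Odd S.card) (hTodd : Odd T.card)
    (hFS : ∑ i ∈ N \ S, x i + ∑ i ∈ S, (1 - x i) = 1)
    (hFT : ∑ i ∈ N \ T, x i + ∑ i ∈ T, (1 - x i) = 1)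
    (hne : S ≠ T) :
    ∀ i ∈ N, i ∉ S ∆ T → (if i ∈ S then 1 - x i else x i) = 0 := by
  set g : α → ℝ := fun i => if i ∈ S then 1 - x i else x i with hg
  set D : Finset α := S ∆ T with hD
  have hDN : D ⊆ N := by
    intro i hi
    rcases Finset.mem_symmDiff.mp hi with ⟨h1, _⟩ | ⟨h1, _⟩
    · exact hS h1
    · exact hT h1
  have hgS : ∑ i ∈ N, g i = 1 := by rw [← sum_g N S x hS]; exact hFS
  have hgT : ∑ i ∈ N, (if i ∈ T then 1 - x i else x i) = 1 := by
    rw [← sum_g N T x hT]; exact hFT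
  have hoff : ∀ i ∈ N \ D, (if i ∈ T then 1 - x i else x i) = g i := by
    intro i hi
    have hiD := (Finset.mem_sdiff.mp hi).2
    by_cases h1 : i ∈ S
    · have h2 : i ∈ T := by
        by_contra h2
        exact hiD (Finset.mem_symmDiff.mpr (Or.inl ⟨h1, h2⟩))
      simp [hg, h1, h2]
    · have h2 : i ∉ T := fun h2 => hiD (Finset.mem_symmDiff.mpr (Or.inr ⟨h2, h1⟩))
      simp [hg, h1, h2]
  have hon : ∀ i ∈ D, (if i ∈ T then 1 - x i else x i) = 1 - g i := by
    intro i hi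
    rcases Finset.mem_symmDiff.mp hi with ⟨h1, h2⟩ | ⟨h1, h2⟩
    · simp [hg, h1, h2]
    · simp [hg, h1, h2]
  have hsplit : (1 : ℝ) = (∑ i ∈ N, g i - ∑ i ∈ D, g i)
      + ((D.card : ℝ) - ∑ i ∈ D, g i) := by
    have e1 : ∑ i ∈ N \ D, (if i ∈ T then 1 - x i else x i)
        + ∑ i ∈ D, (if i ∈ T then 1 - x i else x i)
        = ∑ i ∈ N, (if i ∈ T then 1 - x i else x i) := Finset.sum_sdiff hDN
    have e2 : ∑ i ∈ N \ D, (if i ∈ T then 1 - x i else x i) = ∑ i ∈ N \ D, g i :=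
      Finset.sum_congr rfl hoff
    have e3 : ∑ i ∈ D, (if i ∈ T then 1 - x i else x i) = ∑ i ∈ D, (1 - g i) :=
      Finset.sum_congr rfl hon
    have e4 : ∑ i ∈ D, (1 - g i) = (D.card : ℝ) - ∑ i ∈ D, g i := by
      rw [Finset.sum_sub_distrib, Finset.sum_const, nsmul_eq_mul, mul_one]
    have e5 : ∑ i ∈ N \ D, g i + ∑ i ∈ D, g i = ∑ i ∈ N, g i := Finset.sum_sdiff hDN
    rw [e2, e3, e4] at e1
    rw [hgT] at e1
    linarith
  have hg0 : ∀ i, 0 ≤ g i := by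
    intro i
    rcases hbox i with ⟨ha, hb⟩
    by_cases h : i ∈ S <;> simp [hg, h] <;> linarith
  have hDsum_le : ∑ i ∈ D, g i ≤ 1 := by
    rw [← hgS]
    exact Finset.sum_le_sum_of_subset_of_nonneg hDN (fun i _ _ => hg0 i)
  have hcard_le : D.card ≤ 2 := by
    by_contra hc
    push_neg at hc
    have : (3 : ℝ) ≤ (D.card : ℝ) := by exact_mod_cast hc
    linarith
  have hpar : D.card = (S \ T).card + (T \ S).card := by
    rw [hD, symmDiff_def]
    exact Finset.card_union_of_disjoint (disjoint_sdiff_sdiff)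
  have h1 : (S \ T).card + (S ∩ T).card = S.card := Finset.card_sdiff_add_card_inter S T
  have h2 : (T \ S).card + (T ∩ S).card = T.card := Finset.card_sdiff_add_card_inter T S
  have hic : (S ∩ T).card = (T ∩ S).card := by rw [Finset.inter_comm]
  have hDne : D ≠ ∅ := by
    intro h
    exact hne (by rwa [hD, ← Finset.bot_eq_empty, symmDiff_eq_bot] at h)
  have hDc0 : D.card ≠ 0 := fun h => hDne (Finset.card_eq_zero.mp h)
  obtain ⟨k1, hk1⟩ := hSodd
  obtain ⟨k2, hk2⟩ := hTodd
  have hD2 : D.card = 2 := by omega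
  have hDsum : ∑ i ∈ D, g i = 1 := by
    rw [hD2] at hsplit
    push_cast at hsplit
    linarith
  have hrest : ∑ i ∈ N \ D, g i = 0 := by
    have e5 : ∑ i ∈ N \ D, g i + ∑ i ∈ D, g i = ∑ i ∈ N, g i := Finset.sum_sdiff hDN
    rw [hDsum, hgS] at e5
    linarith
  have hzero := (Finset.sum_eq_zero_iff_of_nonneg (fun i _ => hg0 i)).mp hrest
  intro i hiN hiD
  exact hzero i (Finset.mem_sdiff.mpr ⟨hiN, hiD⟩)

private lemma frac_two [Fintype α] (N : Finset α) (x : α → ℝ)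
    (hbox : ∀ i, 0 ≤ x i ∧ x i ≤ 1)
    (i0 : α) (hi0 : i0 ∈ N) (h0 : 0 < x i0) (h1 : x i0 < 1)
    [DecidablePred fun S : Finset α => S ⊆ N ∧ Odd S.card ∧
      ∑ i ∈ N \ S, x i + ∑ i ∈ S, (1 - x i) = 1] :
    (Finset.univ.filter (fun S : Finset α => S ⊆ N ∧ Odd S.card ∧
      ∑ i ∈ N \ S, x i + ∑ i ∈ S, (1 - x i) = 1)).card ≤ 2 := by
  by_contra hlt
  push_neg at hlt
  obtain ⟨t, ht, htc⟩ := Finset.exists_subset_card_eq (show 3 ≤ _ from hlt)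
  obtain ⟨S, T, U, hST, hSU, hTU, rfl⟩ := Finset.card_eq_three.mp htc
  have hSmem : S ∈ ({S, T, U} : Finset (Finset α)) := by simp
  have hTmem : T ∈ ({S, T, U} : Finset (Finset α)) := by simp
  have hUmem : U ∈ ({S, T, U} : Finset (Finset α)) := by simp
  have hS := (Finset.mem_filter.mp (ht hSmem)).2
  have hT := (Finset.mem_filter.mp (ht hTmem)).2
  have hU := (Finset.mem_filter.mp (ht hUmem)).2
  have contra : ∀ A B : Finset α, A ≠ B →
      (A ⊆ N ∧ Odd A.card ∧ ∑ i ∈ N \ A, x i + ∑ i ∈ A, (1 - x i) = 1) →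
      (B ⊆ N ∧ Odd B.card ∧ ∑ i ∈ N \ B, x i + ∑ i ∈ B, (1 - x i) = 1) →
      i0 ∉ A ∆ B → False := by
    intro A B hne hA hB hni
    have hz := pair_zero N A B x hbox hA.1 hB.1 hA.2.1 hB.2.1 hA.2.2 hB.2.2 hne i0 hi0 hni
    by_cases h : i0 ∈ A <;> simp [h] at hz <;> linarith
  by_cases hab : i0 ∈ S ∆ T
  · by_cases hac : i0 ∈ S ∆ U
    · have hbc : i0 ∉ T ∆ U := by
        simp only [Finset.mem_symmDiff] at hab hac ⊢
        tauto
      exact contra T U hTU hT hU hbc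
    · exact contra S U hSU hS hU hac
  · exact contra S T hST hS hT hab

private lemma int_card [Fintype α] (N : Finset α) (x : α → ℝ)
    (hint : ∀ i ∈ N, x i = 0 ∨ x i = 1)
    [DecidablePred fun S : Finset α => S ⊆ N ∧ Odd S.card ∧
      ∑ i ∈ N \ S, x i + ∑ i ∈ S, (1 - x i) = 1] :
    (Finset.univ.filter (fun S : Finset α => S ⊆ N ∧ Odd S.card ∧
      ∑ i ∈ N \ S, x i + ∑ i ∈ S, (1 - x i) = 1)).card ≤ N.card := by
  classical
  set mset : Finset α → Finset α :=
    fun S => N.filter (fun i => (if i ∈ S then 1 - x i else x i) = 1) with hmset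
  have hone : ∀ S, S ⊆ N → (∑ i ∈ N \ S, x i + ∑ i ∈ S, (1 - x i) = 1) →
      (mset S).card = 1 := by
    intro S hSN hF
    have hsum : ∑ i ∈ N, (if i ∈ S then 1 - x i else x i) = 1 := by
      rw [← sum_g N S x hSN]; exact hF
    have hcongr : ∑ i ∈ N, (if i ∈ S then 1 - x i else x i)
        = ∑ i ∈ N, (if (if i ∈ S then 1 - x i else x i) = 1 then (1 : ℝ) else 0) := by
      refine Finset.sum_congr rfl fun i hi => ?_
      rcases hint i hi with hx | hx <;> by_cases hiS : i ∈ S <;>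
        simp [hiS, hx] <;> norm_num
    have hbool : ∑ i ∈ N, (if (if i ∈ S then 1 - x i else x i) = 1 then (1 : ℝ) else 0)
        = ((mset S).card : ℝ) := by
      rw [hmset]
      simp [Finset.sum_boole]
    have : ((mset S).card : ℝ) = 1 := by rw [← hbool, ← hcongr, hsum]
    exact_mod_cast this
  apply le_trans (Finset.card_le_card_of_injOn mset ?_ ?_) (Finset.card_image_le (f := fun a => ({a} : Finset α)))
  · intro S hSf
    rw [Finset.mem_coe, Finset.mem_filter] at hSf
    obtain ⟨hSN, _, hF⟩ := hSf.2
    obtain ⟨a, ha⟩ := Finset.card_eq_one.mp (hone S hSN hF)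
    have haN : a ∈ N := by
      have : a ∈ mset S := ha ▸ Finset.mem_singleton_self a
      exact (Finset.mem_filter.mp this).1
    rw [ha]
    exact Finset.mem_image_of_mem _ haN
  · intro S hSf T hTf heq
    simp only [Finset.coe_filter, Set.mem_setOf_eq] at hSf hTf
    obtain ⟨_, hSN, _, _⟩ := hSf
    obtain ⟨_, hTN, _, _⟩ := hTf
    ext i
    by_cases hiN : i ∈ N
    · rcases hint i hiN with hx | hx
      · have e1 : i ∈ S ↔ i ∈ mset S := by
          by_cases hiS : i ∈ S <;> simp [hmset, hiN, hiS, hx]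
        have e2 : i ∈ T ↔ i ∈ mset T := by
          by_cases hiT : i ∈ T <;> simp [hmset, hiN, hiT, hx]
        rw [e1, e2, heq]
      · have e1 : i ∈ S ↔ i ∉ mset S := by
          by_cases hiS : i ∈ S <;> simp [hmset, hiN, hiS, hx]
        have e2 : i ∈ T ↔ i ∉ mset T := by
          by_cases hiT : i ∈ T <;> simp [hmset, hiN, hiT, hx]
        rw [e1, e2, heq]
    · constructor
      · intro h; exact absurd (hSN h) hiN
      · intro h; exact absurd (hTN h) hiN

end aux

/-- For any point `x` of the relaxed polytope of a `(dv, dc)`-regular LDPC code, with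
`V_frac(x)` its set of fractional coordinates and `C_frac(x)` the set of checks adjacent
to a fractional coordinate, the number of active inequalities at `x` is at most
`(m - |C_frac|)·dc + 2·|C_frac| + n - |V_frac|`. -/
theorem stmt12 (n m dc : ℕ)
    (Nb : Fin m → Finset (Fin n)) (hdeg : ∀ j, (Nb j).card = dc)
    (x : Fin n → ℝ)
    (hbox : ∀ i, 0 ≤ x i ∧ x i ≤ 1)
    (hforb : ∀ j, ∀ S ⊆ Nb j, Odd S.card →
      1 ≤ ∑ i ∈ Nb j \ S, x i + ∑ i ∈ S, (1 - x i)) :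
    {p : Σ _ : Fin m, Finset (Fin n) | p.2 ⊆ Nb p.1 ∧ Odd p.2.card ∧
        ∑ i ∈ Nb p.1 \ p.2, x i + ∑ i ∈ p.2, (1 - x i) = 1}.ncard
      + {q : Fin n × Bool | (q.2 = false ∧ x q.1 = 0) ∨ (q.2 = true ∧ x q.1 = 1)}.ncard
    ≤ (m - {j : Fin m | ∃ i ∈ Nb j, 0 < x i ∧ x i < 1}.ncard) * dc
      + 2 * {j : Fin m | ∃ i ∈ Nb j, 0 < x i ∧ x i < 1}.ncard
      + (n - {i : Fin n | 0 < x i ∧ x i < 1}.ncard) := by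
  classical
  set P : Fin m → Prop := fun j => ∃ i ∈ Nb j, 0 < x i ∧ x i < 1 with hP
  set Q : Fin n → Prop := fun i => 0 < x i ∧ x i < 1 with hQ
  set Fj : Fin m → Finset (Finset (Fin n)) := fun j =>
    Finset.univ.filter (fun S : Finset (Fin n) => S ⊆ Nb j ∧ Odd S.card ∧
      ∑ i ∈ Nb j \ S, x i + ∑ i ∈ S, (1 - x i) = 1) with hFj
  -- rewrite the first ncard
  have e1 : {p : Σ _ : Fin m, Finset (Fin n) | p.2 ⊆ Nb p.1 ∧ Odd p.2.card ∧
        ∑ i ∈ Nb p.1 \ p.2, x i + ∑ i ∈ p.2, (1 - x i) = 1}.ncard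
      = (Finset.univ.sigma Fj).card := by
    rw [← Set.ncard_coe_finset]
    congr 1
    ext p
    simp [hFj, Finset.mem_sigma]
  set Bf : Finset (Fin n × Bool) := Finset.univ.filter
    (fun q : Fin n × Bool => (q.2 = false ∧ x q.1 = 0) ∨ (q.2 = true ∧ x q.1 = 1)) with hBf
  have e2 : {q : Fin n × Bool | (q.2 = false ∧ x q.1 = 0) ∨ (q.2 = true ∧ x q.1 = 1)}.ncard
      = Bf.card := by
    rw [← Set.ncard_coe_finset]
    congr 1
    ext q
    simp [hBf]
  have e3 : {j : Fin m | ∃ i ∈ Nb j, 0 < x i ∧ x i < 1}.ncard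
      = (Finset.univ.filter P).card := by
    rw [← Set.ncard_coe_finset]
    congr 1
    ext j
    simp [hP]
  have e4 : {i : Fin n | 0 < x i ∧ x i < 1}.ncard
      = (Finset.univ.filter Q).card := by
    rw [← Set.ncard_coe_finset]
    congr 1
    ext i
    simp [hQ]
  rw [e1, e2, e3, e4]
  -- bound on the check side
  have hsigma : (Finset.univ.sigma Fj).card = ∑ j, (Fj j).card := Finset.card_sigma _ _
  have hcheck : ∀ j, (Fj j).card ≤ if P j then 2 else dc := by
    intro j
    by_cases hPj : P j
    · rw [if_pos hPj]
      obtain ⟨i0, hi0, h0, h1⟩ := hPj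
      exact frac_two (Nb j) x hbox i0 hi0 h0 h1
    · rw [if_neg hPj]
      have hint : ∀ i ∈ Nb j, x i = 0 ∨ x i = 1 := by
        intro i hi
        rcases hbox i with ⟨ha, hb⟩
        rcases eq_or_lt_of_le ha with h | h
        · exact Or.inl h.symm
        · rcases eq_or_lt_of_le hb with h' | h'
          · exact Or.inr h'
          · exact absurd ⟨i, hi, h, h'⟩ hPj
      calc (Fj j).card ≤ (Nb j).card := int_card (Nb j) x hint
        _ = dc := hdeg j
  have hchecksum : ∑ j, (Fj j).card
      ≤ (Finset.univ.filter P).card * 2 + (Finset.univ.filter (fun j => ¬ P j)).card * dc := by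
    calc ∑ j, (Fj j).card ≤ ∑ j, (if P j then 2 else dc) :=
          Finset.sum_le_sum (fun j _ => hcheck j)
      _ = (Finset.univ.filter P).card * 2 + (Finset.univ.filter (fun j => ¬ P j)).card * dc := by
          rw [Finset.sum_ite, Finset.sum_const, Finset.sum_const, smul_eq_mul, smul_eq_mul]
  have hPm : (Finset.univ.filter P).card + (Finset.univ.filter (fun j => ¬ P j)).card = m := by
    rw [Finset.card_filter_add_card_filter_not, Finset.card_univ, Fintype.card_fin]
  -- bound on the box side
  have hbb : Bf.card ≤ (Finset.univ.filter (fun i => ¬ Q i)).card := by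
    apply Finset.card_le_card_of_injOn (fun q => q.1)
    · intro q hq
      rw [hBf, Finset.mem_coe, Finset.mem_filter] at hq
      rcases hq.2 with ⟨_, hx⟩ | ⟨_, hx⟩ <;>
        · simp only [Finset.mem_coe, Finset.mem_filter, Finset.mem_univ, true_and, hQ]
          rw [hx]; norm_num
    · intro q hq q' hq' heq
      replace heq : q.1 = q'.1 := heq
      simp only [hBf, Finset.coe_filter, Set.mem_setOf_eq] at hq hq'
      have : q.2 = q'.2 := by
        rcases hq.2 with ⟨hb, hx⟩ | ⟨hb, hx⟩ <;> rcases hq'.2 with ⟨hb', hx'⟩ | ⟨hb', hx'⟩ <;>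
          rw [hb, hb'] <;> rw [heq] at hx <;> first
            | rfl
            | (exfalso; rw [hx] at hx'; norm_num at hx')
      exact Prod.ext heq this
  have hQn : (Finset.univ.filter Q).card + (Finset.univ.filter (fun i => ¬ Q i)).card = n := by
    rw [Finset.card_filter_add_card_filter_not, Finset.card_univ, Fintype.card_fin]
  rw [hsigma,
    show m - (Finset.univ.filter P).card = (Finset.univ.filter (fun j => ¬ P j)).card by omega,
    show n - (Finset.univ.filter Q).card = (Finset.univ.filter (fun i => ¬ Q i)).card by omega]
  refine le_trans (Nat.add_le_add hchecksum hbb) (Nat.le_of_eq ?_)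
  ring
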